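/- Suppose T = (T_k)_{k∈K} with T_k ∈ (0,1) satisfies T_k = R_k (1−T_k) Θ_k for all k, where Θ = Q T. Then the Metzler matrix J = −diag(β_k Θ_k + r_k + γ_k) + diag(β_k (1−T_k))·Q satisfies J T = −diag((r_k+γ_k) R_k Θ_k)·T, which has all entries strictly negative, and consequently every eigenvalue of J has strictly negative real part (linear stability of the endemic equilibrium). -/

import Mathlib

open Matrix

/-- Linear stability of the endemic equilibrium: the Metzler matrix
`J = -diag(β_k Θ_k + r_k + γ_k) + diag(β_k (1-T_k)) Q` satisfies
`J T = -diag((r_k+γ_k) R_k Θ_k) T < 0`, and all its eigenvalues have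
strictly negative real part. -/
theorem endemic_linear_stability {K : Type*} [Fintype K] [DecidableEq K] [Nonempty K]
    (β r γ : K → ℝ) (hβ : ∀ k, 0 < β k) (hr : ∀ k, 0 < r k) (hγ : ∀ k, 0 < γ k)
    (Q : Matrix K K ℝ) (hQ : ∀ k s, 0 ≤ Q k s)
    (hQirr : ∀ k s, ∃ n : ℕ, 1 ≤ n ∧ 0 < (Q ^ n) k s)
    (R : K → ℝ) (hR : ∀ k, R k = β k / (r k + γ k))
    (T Θ : K → ℝ) (hT : ∀ k, T k ∈ Set.Ioo (0:ℝ) 1)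
    (hΘ : Θ = Q.mulVec T)
    (hfix : ∀ k, T k = R k * (1 - T k) * Θ k)
    (J : Matrix K K ℝ)
    (hJ : J = -Matrix.diagonal (fun k => β k * Θ k + r k + γ k) +
      Matrix.diagonal (fun k => β k * (1 - T k)) * Q) :
    (J.mulVec T = fun k => -((r k + γ k) * R k * Θ k * T k)) ∧
    (∀ k, J.mulVec T k < 0) ∧
    (∀ μ ∈ spectrum ℂ (J.map Complex.ofReal), μ.re < 0) := by
  have hT0 : ∀ k, 0 < T k := fun k => (hT k).1
  have hT1 : ∀ k, T k < 1 := fun k => (hT k).2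
  have hrγ : ∀ k, 0 < r k + γ k := fun k => add_pos (hr k) (hγ k)
  have hR0 : ∀ k, 0 < R k := fun k => hR k ▸ div_pos (hβ k) (hrγ k)
  have hβeq : ∀ k, β k = (r k + γ k) * R k := fun k => by
    rw [hR k, mul_comm, div_mul_cancel₀ _ (hrγ k).ne']
  have hΘpos : ∀ k, 0 < Θ k := by
    intro k
    by_contra h
    push_neg at h
    have h1 : 0 < R k * (1 - T k) := mul_pos (hR0 k) (by linarith [hT1 k])
    have h2 : R k * (1 - T k) * Θ k ≤ 0 := mul_nonpos_of_nonneg_of_nonpos h1.le h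
    linarith [hfix k, hT0 k]
  -- entrywise formula for J.mulVec T
  have hJTk : ∀ k, J.mulVec T k = -((r k + γ k) * R k * Θ k * T k) := by
    intro k
    have hQT : Q.mulVec T k = Θ k := by rw [hΘ]
    rw [hJ]
    rw [Matrix.add_mulVec, Matrix.neg_mulVec, ← Matrix.mulVec_mulVec]
    simp only [Pi.add_apply, Pi.neg_apply, Matrix.mulVec_diagonal, hQT]
    rw [hβeq k]
    linear_combination (-(r k + γ k)) * hfix k
  have hJT : J.mulVec T = fun k => -((r k + γ k) * R k * Θ k * T k) := funext hJTk
  have hc : ∀ k, 0 < (r k + γ k) * R k * Θ k * T k := fun k =>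
    mul_pos (mul_pos (mul_pos (hrγ k) (hR0 k)) (hΘpos k)) (hT0 k)
  have hneg : ∀ k, J.mulVec T k < 0 := by
    intro k
    rw [hJTk k]
    linarith [hc k]
  refine ⟨hJT, hneg, ?_⟩
  -- off-diagonal nonnegativity (Metzler)
  have hMetz : ∀ k s, k ≠ s → 0 ≤ J k s := by
    intro k s hks
    rw [hJ]
    simp only [Matrix.add_apply, Matrix.neg_apply, Matrix.diagonal_apply_ne _ hks,
      Matrix.diagonal_mul, neg_zero, zero_add]
    have : 0 ≤ β k * (1 - T k) := by nlinarith [hβ k, hT1 k]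
    exact mul_nonneg this (hQ k s)
  intro μ hμ
  rw [← AlgEquiv.spectrum_eq (Matrix.toLinAlgEquiv' (R := ℂ) (n := K)),
    ← Module.End.hasEigenvalue_iff_mem_spectrum] at hμ
  obtain ⟨v, hv⟩ := hμ.exists_hasEigenvector
  have hvne : v ≠ 0 := hv.right
  have heq : (J.map Complex.ofReal).mulVec v = μ • v := by
    simpa using hv.apply_eq_smul
  obtain ⟨k, -, hk⟩ := Finset.exists_max_image Finset.univ (fun s => ‖v s‖ / T s)
    ⟨Classical.arbitrary K, Finset.mem_univ _⟩
  set m := ‖v k‖ / T k with hm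
  have hms : ∀ s, ‖v s‖ ≤ m * T s := by
    intro s
    have h := hk s (Finset.mem_univ s)
    calc ‖v s‖ = ‖v s‖ / T s * T s := by rw [div_mul_cancel₀ _ (hT0 s).ne']
    _ ≤ m * T s := mul_le_mul_of_nonneg_right h (hT0 s).le
  have hm0 : 0 < m := by
    obtain ⟨s, hs⟩ := Function.ne_iff.mp hvne
    have h1 : 0 < ‖v s‖ / T s := div_pos (norm_pos_iff.mpr hs) (hT0 s)
    exact lt_of_lt_of_le h1 (hk s (Finset.mem_univ s))
  have hvk : ‖v k‖ = m * T k := (div_mul_cancel₀ _ (hT0 k).ne').symm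
  -- the eigenvalue equation at the argmax index
  have hrowk : ∑ s, ((J k s : ℂ)) * v s = μ * v k := by
    have := congrFun heq k
    simpa [Matrix.mulVec, dotProduct, Matrix.map_apply] using this
  have key : (μ - (J k k : ℂ)) * v k = ∑ s ∈ Finset.univ.erase k, (J k s : ℂ) * v s := by
    have h2 := Finset.add_sum_erase Finset.univ (fun s => (J k s : ℂ) * v s) (Finset.mem_univ k)
    rw [hrowk] at h2
    linear_combination -h2
  have hbound : ‖μ - (J k k : ℂ)‖ * (m * T k)
      ≤ ∑ s ∈ Finset.univ.erase k, J k s * (m * T s) := by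
    rw [← hvk, ← norm_mul, key]
    refine (norm_sum_le _ _).trans (Finset.sum_le_sum ?_)
    intro s hs
    have hks : k ≠ s := fun h => (Finset.mem_erase.mp hs).1 h.symm
    rw [norm_mul, Complex.norm_real, Real.norm_eq_abs, abs_of_nonneg (hMetz k s hks)]
    exact mul_le_mul_of_nonneg_left (hms s) (hMetz k s hks)
  have hsum : ∑ s ∈ Finset.univ.erase k, J k s * (m * T s)
      = m * (J.mulVec T k - J k k * T k) := by
    have h2 := Finset.add_sum_erase Finset.univ (fun s => J k s * T s) (Finset.mem_univ k)
    have h3 : J.mulVec T k = ∑ s, J k s * T s := rfl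
    have h4 : ∑ s ∈ Finset.univ.erase k, J k s * (m * T s)
        = m * ∑ s ∈ Finset.univ.erase k, J k s * T s := by
      rw [Finset.mul_sum]; exact Finset.sum_congr rfl fun s _ => by ring
    rw [h4, h3]; rw [← h2]; ring
  have hre : μ.re - J k k ≤ ‖μ - (J k k : ℂ)‖ := by
    have h := Complex.re_le_norm (μ - (J k k : ℂ))
    simpa using h
  have hA : (μ.re - J k k) * (m * T k) ≤ ‖μ - (J k k : ℂ)‖ * (m * T k) :=
    mul_le_mul_of_nonneg_right hre (mul_pos hm0 (hT0 k)).le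
  rw [hsum, hJTk k] at hbound
  by_contra hcon
  push_neg at hcon
  have h1 : 0 ≤ μ.re * (m * T k) := mul_nonneg hcon (mul_pos hm0 (hT0 k)).le
  have h2 : 0 < m * ((r k + γ k) * R k * Θ k * T k) := mul_pos hm0 (hc k)
  nlinarith [hA, hbound, h1, h2]
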